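/- Let G be a finite group and p a prime. Then O_p(G) is contained in Z*(G) if and only if O_p(G/Z*(G)) is the trivial subgroup. -/

import Mathlib

/-- The hypercenter `Z*(G)` of a group: the union (supremum) of the upper central series. -/
def hypercenter (G : Type*) [Group G] : Subgroup G :=
  ⨆ n : ℕ, upperCentralSeries G n

instance hypercenter_normal (G : Type*) [Group G] : (hypercenter G).Normal := by
  constructor
  intro x hx g
  have hdir : Directed (· ≤ ·) (fun n : ℕ => upperCentralSeries G n) :=
    (upperCentralSeries_mono G).directed_le
  rw [hypercenter, Subgroup.mem_iSup_of_directed hdir] at hx ⊢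
  obtain ⟨n, hn⟩ := hx
  exact ⟨n, (inferInstance : (Subgroup.upperCentralSeries G n).Normal).conj_mem x hn g⟩

/-- The `p`-core `O_p(G)`: the largest normal `p`-subgroup of `G`, i.e. the supremum of all
normal `p`-subgroups. -/
def pCore (p : ℕ) (G : Type*) [Group G] : Subgroup G :=
  ⨆ (H : Subgroup G) (_ : H.Normal ∧ IsPGroup p H), H

lemma le_pCore {p : ℕ} {G : Type*} [Group G] {H : Subgroup G}
    (h1 : H.Normal) (h2 : IsPGroup p H) : H ≤ pCore p G :=
  le_iSup₂ (f := fun (H : Subgroup G) (_ : H.Normal ∧ IsPGroup p H) => H) H ⟨h1, h2⟩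

lemma pCore_le {p : ℕ} {G : Type*} [Group G] {K : Subgroup G}
    (h : ∀ H : Subgroup G, H.Normal → IsPGroup p H → H ≤ K) : pCore p G ≤ K :=
  iSup₂_le fun H hH => h H hH.1 hH.2

lemma hypercenter_eq_ucs (G : Type*) [Group G] [Finite G] :
    ∃ n, hypercenter G = upperCentralSeries G n := by
  obtain ⟨a, ⟨n, rfl⟩, hmax⟩ := Set.Finite.exists_maximalFor id
    (Set.range (upperCentralSeries G)) (Set.toFinite _) ⟨_, Set.mem_range_self 0⟩
  refine ⟨n, le_antisymm (iSup_le fun m => ?_) (le_iSup _ n)⟩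
  have h1 : upperCentralSeries G n ≤ upperCentralSeries G (max m n) :=
    upperCentralSeries_mono G (le_max_right m n)
  have h2 := hmax (Set.mem_range_self (max m n)) h1
  calc upperCentralSeries G m ≤ upperCentralSeries G (max m n) :=
        upperCentralSeries_mono G (le_max_left m n)
    _ ≤ upperCentralSeries G n := h2

lemma nilpotent_of_pgroup_quotient {G : Type*} [Group G] [Finite G] {p : ℕ} (hp : p.Prime)
    (N : Subgroup G)
    (hPQ : IsPGroup p (↥N ⧸ (hypercenter G).subgroupOf N)) :
    Group.IsNilpotent ↥N := by
  haveI : Fact p.Prime := ⟨hp⟩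
  obtain ⟨c, hc⟩ := hypercenter_eq_ucs G
  set Zn : Subgroup ↥N := (hypercenter G).subgroupOf N with hZn
  let q : ↥N →* ↥N ⧸ Zn := QuotientGroup.mk' Zn
  haveI : Group.IsNilpotent (↥N ⧸ Zn) := hPQ.isNilpotent
  obtain ⟨m, hm⟩ := Group.IsNilpotent.nilpotent (↥N ⧸ Zn)
  have hm1 : upperCentralSeries (↥N ⧸ Zn) (m + 1) = ⊤ :=
    le_antisymm le_top (hm ▸ upperCentralSeries_mono _ (Nat.le_succ m))
  rw [nilpotent_iff_finite_ascending_central_series]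
  refine ⟨c + m + 1,
    fun i => if i ≤ c then (upperCentralSeries G i).subgroupOf N
      else Subgroup.comap q (upperCentralSeries (↥N ⧸ Zn) (i - c)), ⟨?_, ?_⟩, ?_⟩
  · simp [upperCentralSeries]
  · intro x n hx g
    dsimp only at hx ⊢
    by_cases hn1 : n + 1 ≤ c
    · rw [if_pos hn1] at hx
      rw [if_pos (le_of_lt hn1)]
      have : (x : G) ∈ upperCentralSeries G (n + 1) := hx
      have hcomm := mem_upperCentralSeries_succ_iff.mp this (g : G)
      rw [Subgroup.mem_subgroupOf]
      exact hcomm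
    · rw [if_neg hn1] at hx
      have hcn : c ≤ n := by omega
      have hsub : n + 1 - c = (n - c) + 1 := by omega
      rw [hsub] at hx
      have hcomm := mem_upperCentralSeries_succ_iff.mp hx (q g)
      have hq : q (x * g * x⁻¹ * g⁻¹) ∈ upperCentralSeries (↥N ⧸ Zn) (n - c) := by
        simpa [map_mul, map_inv, commutatorElement_def, upperCentralSeries] using hcomm
      by_cases hnc : n ≤ c
      · have hnc' : n = c := le_antisymm hnc hcn
        rw [if_pos hnc, hnc', ← hc]
        have hzero : n - c = 0 := by omega
        rw [hzero] at hq
        have : x * g * x⁻¹ * g⁻¹ ∈ Zn := by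
          have := (QuotientGroup.eq_one_iff (x * g * x⁻¹ * g⁻¹)).mp (by have h := hq; rw [upperCentralSeries, Subgroup.upperCentralSeries_zero, Subgroup.mem_bot] at h; exact h)
          exact this
        exact this
      · rw [if_neg hnc]
        exact hq
  · dsimp only
    rw [if_neg (by omega)]
    have : c + m + 1 - c = m + 1 := by omega
    rw [this, hm1, Subgroup.comap_top]


/-- Let `G` be a finite group and `p` a prime. Then `O_p(G) ≤ Z*(G)` if and
only if `O_p(G/Z*(G))` is trivial. -/
theorem pCore_le_hypercenter_iff
    {G : Type*} [Group G] [Finite G] (p : ℕ) (hp : p.Prime) :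
    pCore p G ≤ hypercenter G ↔ pCore p (G ⧸ hypercenter G) = ⊥ := by
  haveI : Fact p.Prime := ⟨hp⟩
  constructor
  · intro hle
    rw [eq_bot_iff]
    refine pCore_le fun K hKn hKp => ?_
    set Z := hypercenter G with hZdef
    set N : Subgroup G := K.comap (QuotientGroup.mk' Z) with hNdef
    haveI hNn : N.Normal := hKn.comap (QuotientGroup.mk' Z)
    set φ : ↥N →* G ⧸ Z := (QuotientGroup.mk' Z).comp N.subtype with hφdef
    have hker : φ.ker = Z.subgroupOf N := by
      rw [hφdef, ← MonoidHom.comap_ker, QuotientGroup.ker_mk']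
      rfl
    have hrange : φ.range = K := by
      rw [hφdef, MonoidHom.range_comp, Subgroup.range_subtype, hNdef,
        Subgroup.map_comap_eq_self_of_surjective (QuotientGroup.mk'_surjective _)]
    have e0 := QuotientGroup.quotientKerEquivRange φ
    have e : (↥N ⧸ Z.subgroupOf N) ≃* ↥K :=
      ((QuotientGroup.quotientMulEquivOfEq hker).symm.trans e0).trans
        (MulEquiv.subgroupCongr hrange)
    have hq : IsPGroup p (↥N ⧸ Z.subgroupOf N) := hKp.of_equiv e.symm
    have hnil := nilpotent_of_pgroup_quotient hp N hq
    let P : Sylow p ↥N := default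
    have h03 := (isNilpotent_of_finite_tfae (G := ↥N)).out 0 3
    have hPn : (P : Subgroup ↥N).Normal := h03.mp hnil p ⟨hp⟩ P
    haveI := hPn
    haveI hchar : (P : Subgroup ↥N).Characteristic := Sylow.characteristic_of_normal P hPn
    set P' : Subgroup G := (P : Subgroup ↥N).map N.subtype with hP'def
    haveI hP'n : P'.Normal := inferInstance
    have hP'p : IsPGroup p P' := P.isPGroup'.map N.subtype
    have hP'Z : P' ≤ Z := le_trans (le_pCore hP'n hP'p) hle
    have hdvd : Z.relIndex N ∣ P'.relIndex N :=
      Subgroup.relIndex_dvd_of_le_left N hP'Z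
    have hrel : P'.relIndex N = (P : Subgroup ↥N).index := by
      rw [Subgroup.relIndex, hP'def]
      congr 1
      exact Subgroup.comap_map_eq_self_of_injective N.subtype_injective _
    have hcard : Z.relIndex N = Nat.card ↥K := by
      rw [Subgroup.relIndex, Subgroup.index_eq_card]
      exact Nat.card_congr e.toEquiv
    obtain ⟨k, hk⟩ := IsPGroup.iff_card.mp hKp
    have hnd : ¬ p ∣ (P : Subgroup ↥N).index := P.not_dvd_index
    have hk0 : k = 0 := by
      by_contra h0
      refine hnd (dvd_trans (dvd_pow_self p h0) ?_)
      rw [← hk, ← hcard, ← hrel]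
      exact hdvd
    have : Nat.card ↥K = 1 := by rw [hk, hk0, pow_zero]
    exact le_of_eq (Subgroup.eq_bot_of_card_eq K this)
  · intro hbot
    refine pCore_le fun H hHn hHp => ?_
    have h1 : H.map (QuotientGroup.mk' (hypercenter G)) ≤ pCore p (G ⧸ hypercenter G) :=
      le_pCore (hHn.map _ (QuotientGroup.mk'_surjective _)) (hHp.map _)
    rw [hbot] at h1
    have h2 := Subgroup.map_le_iff_le_comap.mp h1
    rwa [MonoidHom.comap_bot, QuotientGroup.ker_mk'] at h2
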